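/- For the codifferential d₂ = ψ_f^{ff} on a 1|1-dimensional space, the Hochschild cohomology is H⁰(d₂) = ⟨φ_e, φ_f⟩ (dimension 2) and Hⁿ(d₂) = ⟨φ_e^{eⁿ}⟩ (dimension 1) for all n ≥ 1, where φ_e^{eⁿ} is the cochain sending e⊗…⊗e (n times) to e and all other basis tensors to 0. -/

import Mathlib

/-! Framework: the `1|1`-dimensional complex graded vector space `W = ⟨e,f⟩`
(`false` denotes the even basis element `e`, `true` the odd basis element `f`),
Hochschild cochains in coefficient form, and the Hochschild coboundary
`D(φ) = [d,φ]` given by the graded commutator of coderivations on `T(W)`. -/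

/-- A degree-`n` multi-index of basis elements of `W`. -/
abbrev Idx (n : ℕ) := Fin n → Bool

/-- A degree-`n` Hochschild cochain `Cⁿ(W) = Hom(W^⊗n, W)`, recorded by its
coefficients: `φ J i` is the coefficient of `w_i` in `φ(w_J)`. -/
abbrev Cochain (n : ℕ) := Idx n → Bool → ℂ

/-- Parity (0 or 1) of a basis element: `e = false` is even, `f = true` is odd. -/
def pb (b : Bool) : ℕ := if b then 1 else 0

/-- Total parity count of a multi-index. -/
def pc {n : ℕ} (J : Idx n) : ℕ := ∑ i, pb (J i)

/-- Parity count of the length-`t` prefix of a multi-index. -/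
def pcP {n : ℕ} (J : Idx n) (t : ℕ) : ℕ :=
  ∑ i ∈ Finset.univ.filter (fun i : Fin n => i.val < t), pb (J i)

/-- The sign `(−1)^m`. -/
noncomputable def msign (m : ℕ) : ℂ := (-1) ^ m

/-- Replace the adjacent pair of entries at positions `k, k+1` of `J` by the single entry `j`. -/
def repl {n : ℕ} (J : Idx (n + 1)) (k : Fin n) (j : Bool) : Idx n :=
  fun i => if i.val < k.val then J i.castSucc else if i.val = k.val then j else J i.succ

/-- The coderivation `ψ_i^{ab} ∈ Hom(W⊗W, W)` sending `w_a ⊗ w_b` to `w_i`,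
in coefficient form: `delta2 a b i x y j` is the coefficient of `w_j` in `ψ_i^{ab}(w_x ⊗ w_y)`. -/
noncomputable def delta2 (a b i : Bool) : Bool → Bool → Bool → ℂ :=
  fun x y j => if x = a ∧ y = b ∧ j = i then 1 else 0

/-- The Hochschild coboundary `D(φ) = [d, φ] = d∘φ − (−1)^{|φ|} φ∘d` of a cochain
`φ ∈ Cⁿ(W)` with respect to an odd quadratic codifferential `d`, with the usual
Koszul signs for insertions of coderivations. -/
noncomputable def Dmap (d : Bool → Bool → Bool → ℂ) {n : ℕ} (φ : Cochain n) :
    Cochain (n + 1) := fun J i =>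
  (∑ j : Bool, φ (fun k => J k.castSucc) j * d j (J (Fin.last n)) i)
    + (∑ j : Bool, msign ((pc (fun k : Fin n => J k.succ) + pb j) * pb (J 0)) *
        (φ (fun k => J k.succ) j * d (J 0) j i))
    - ∑ k : Fin n, ∑ j : Bool,
        msign (pc (repl J k j) + pb i + pcP J k.val) *
          (φ (repl J k j) i * d (J k.castSucc) (J k.succ) j)

/-- The Hochschild coboundary as a linear map `Cⁿ(W) →ₗ Cⁿ⁺¹(W)`. -/
noncomputable def Dlin (d : Bool → Bool → Bool → ℂ) (n : ℕ) :
    Cochain n →ₗ[ℂ] Cochain (n + 1) where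
  toFun := Dmap d
  map_add' φ ψ := by
    funext J i
    simp only [Dmap, Pi.add_apply, mul_add, add_mul, Finset.sum_add_distrib]
    ring
  map_smul' c φ := by
    funext J i
    simp only [Dmap, Pi.smul_apply, smul_eq_mul, RingHom.id_apply, mul_add, mul_sub,
      Finset.mul_sum, mul_assoc, mul_left_comm]

/-- Hochschild cocycles: `ker (D : Cⁿ → Cⁿ⁺¹)`. -/
noncomputable def Zsp (d : Bool → Bool → Bool → ℂ) (n : ℕ) : Submodule ℂ (Cochain n) :=
  LinearMap.ker (Dlin d n)

/-- Hochschild coboundaries: `im (D : Cⁿ⁻¹ → Cⁿ)` (there are none in degree `0`). -/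
noncomputable def Bsp (d : Bool → Bool → Bool → ℂ) : (n : ℕ) → Submodule ℂ (Cochain n)
  | 0 => ⊥
  | (n + 1) => LinearMap.range (Dlin d n)

/-- The Hochschild cohomology `Hⁿ(d) = ker D / im D`. -/
abbrev Hsp (d : Bool → Bool → Bool → ℂ) (n : ℕ) :=
  (Zsp d n) ⧸ (Submodule.comap (Zsp d n).subtype (Bsp d n))

/-- The basis cochain `φ^I_i`, sending `w_I` to `w_i` and other basis tensors to `0`. -/
noncomputable def bC {n : ℕ} (I : Idx n) (i : Bool) : Cochain n :=
  fun J j => if J = I ∧ j = i then 1 else 0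

/-- `φ_e^{eⁿ}`: the cochain sending `e^⊗n` to `e` and all other basis tensors to `0`. -/
noncomputable def phiE (n : ℕ) : Cochain n := bC (fun _ => false) false

/-- `φ_f^{eⁿ}`: the cochain sending `e^⊗n` to `f` and all other basis tensors to `0`. -/
noncomputable def phiF (n : ℕ) : Cochain n := bC (fun _ => false) true

/-- `d₁ = ψ_e^{ef} − ψ_e^{fe} + ψ_f^{ee} − ψ_f^{ff}`. -/
noncomputable def dd1 : Bool → Bool → Bool → ℂ :=
  fun a b i => delta2 false true false a b i - delta2 true false false a b i
    + delta2 false false true a b i - delta2 true true true a b i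

/-- `d₂ = ψ_f^{ff}`. -/
noncomputable def dd2 : Bool → Bool → Bool → ℂ := delta2 true true true

/-- `d₃ = ψ_e^{ef} − ψ_f^{ff}`. -/
noncomputable def dd3 : Bool → Bool → Bool → ℂ :=
  fun a b i => delta2 false true false a b i - delta2 true true true a b i

/-- `d₄ = ψ_e^{fe} + ψ_f^{ff}`. -/
noncomputable def dd4 : Bool → Bool → Bool → ℂ :=
  fun a b i => delta2 true false false a b i + delta2 true true true a b i

/-- `d₅ = ψ_e^{ef} − ψ_e^{fe} − ψ_f^{ff}`. -/
noncomputable def dd5 : Bool → Bool → Bool → ℂ :=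
  fun a b i => delta2 false true false a b i - delta2 true false false a b i
    - delta2 true true true a b i

/-- `d₆ = ψ_f^{ee}`. -/
noncomputable def dd6 : Bool → Bool → Bool → ℂ := delta2 false false true

-- msign / pb / pc / pcP basics
lemma msign_apply (a : ℕ) : msign a = if a % 2 = 0 then 1 else -1 := by
  rcases Nat.even_or_odd a with h | h
  · rw [msign, h.neg_one_pow, if_pos (Nat.even_iff.mp h)]
  · rw [msign, h.neg_one_pow, if_neg (by simp [Nat.odd_iff.mp h])]

lemma msign_mul (a b : ℕ) : msign a * msign b = msign (a + b) := by
  rw [msign, msign, msign, pow_add]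

lemma msign_cancel {a b : ℕ} (h : (a + b) % 2 = 1) (x : ℂ) :
    msign a * x + msign b * x = 0 := by
  rw [msign_apply, msign_apply]
  split_ifs with h1 h2 h2 <;> first | omega | ring

lemma msign_congr {a b : ℕ} (h : a % 2 = b % 2) : msign a = msign b := by
  rw [msign_apply, msign_apply, h]

lemma msign_sq (a : ℕ) : msign a * msign a = 1 := by
  rw [msign_apply]; split_ifs <;> ring

@[simp] lemma pb_true : pb true = 1 := rfl
@[simp] lemma pb_false : pb false = 0 := rfl

lemma pc_cons {n : ℕ} (b : Bool) (J : Idx n) : pc (Fin.cons b J) = pb b + pc J := by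
  rw [pc, Fin.sum_univ_succ, Fin.cons_zero]
  simp [pc, Fin.cons_succ]

lemma pc_eq {n : ℕ} (J : Idx n) : pc J = ∑ i, pb (J i) := rfl

lemma pcP_eq {n : ℕ} (J : Idx n) (t : ℕ) :
    pcP J t = ∑ i, if i.val < t then pb (J i) else 0 := by
  rw [pcP, Finset.sum_filter]

lemma pcP_zero {n : ℕ} (J : Idx n) : pcP J 0 = 0 := by
  rw [pcP_eq]; simp

lemma pcP_cons {n : ℕ} (b : Bool) (J : Idx n) (t : ℕ) :
    pcP (Fin.cons b J) (t + 1) = pb b + pcP J t := by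
  rw [pcP_eq, Fin.sum_univ_succ, Fin.cons_zero, if_pos (by simp), pcP_eq]
  congr 1
  refine Finset.sum_congr rfl fun i _ => ?_
  rw [Fin.cons_succ, Fin.val_succ]
  simp only [Nat.add_lt_add_iff_right]

lemma pcP_eq_zero {n : ℕ} (J : Idx n) (t : ℕ) (h : ∀ i : Fin n, i.val < t → J i = false) :
    pcP J t = 0 := by
  rw [pcP_eq]
  refine Finset.sum_eq_zero fun i _ => ?_
  split_ifs with hi
  · rw [h i hi]; rfl
  · rfl
-- repl lemmas
lemma repl_apply_lt {n : ℕ} (J : Idx (n+1)) (k : Fin n) (j : Bool) {i : Fin n}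
    (h : i.val < k.val) : repl J k j i = J i.castSucc := if_pos h

lemma repl_apply_eq {n : ℕ} (J : Idx (n+1)) (k : Fin n) (j : Bool) :
    repl J k j k = j := by
  rw [repl, if_neg (lt_irrefl _), if_pos rfl]

lemma repl_apply_gt {n : ℕ} (J : Idx (n+1)) (k : Fin n) (j : Bool) {i : Fin n}
    (h : k.val < i.val) : repl J k j i = J i.succ := by
  rw [repl, if_neg (by omega), if_neg (by omega)]

lemma repl_eq_comp {n : ℕ} (J : Idx (n+1)) (k : Fin n) (h : J k.succ = true) :
    repl J k true = fun i => J (k.castSucc.succAbove i) := by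
  funext i
  rcases lt_trichotomy i.val k.val with hl | he | hg
  · rw [repl_apply_lt _ _ _ hl, Fin.succAbove_castSucc_of_lt _ _ hl]
  · have : i = k := Fin.ext he
    subst this
    rw [repl_apply_eq, Fin.succAbove_castSucc_self, h]
  · rw [repl_apply_gt _ _ _ hg, Fin.succAbove_castSucc_of_le _ _ (le_of_lt hg)]

lemma pc_repl {n : ℕ} (J : Idx (n+1)) (k : Fin n) (h : J k.succ = true)
    (h' : J k.castSucc = true) : pc J = pc (repl J k true) + 1 := by
  rw [pc_eq, Fin.sum_univ_succAbove _ k.castSucc, repl_eq_comp J k h, pc_eq, h']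
  simp [add_comm]

-- cons lemmas
lemma cons_last {n : ℕ} (b : Bool) (J : Idx (n+1)) :
    (Fin.cons b J : Idx (n+2)) (Fin.last (n+1)) = J (Fin.last n) := by
  rw [← Fin.succ_last, Fin.cons_succ]

lemma repl_cons_succ {n : ℕ} (J : Idx (n+1)) (k : Fin n) (j : Bool) :
    repl (Fin.cons true J) k.succ j = Fin.cons true (repl J k j) := by
  funext i
  induction i using Fin.cases with
  | zero =>
    rw [repl_apply_lt _ _ _ (by simp), Fin.castSucc_zero, Fin.cons_zero, Fin.cons_zero]
  | succ i =>
    rw [Fin.cons_succ]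
    rcases lt_trichotomy i.val k.val with hl | he | hg
    · rw [repl_apply_lt _ _ _ (by simp [hl]), repl_apply_lt _ _ _ hl, ← Fin.succ_castSucc,
        Fin.cons_succ]
    · have : i = k := Fin.ext he
      subst this
      rw [repl_apply_eq, repl_apply_eq]
    · rw [repl_apply_gt _ _ _ (by simp [hg]), repl_apply_gt _ _ _ hg, Fin.cons_succ]

lemma repl_cons_zero {n : ℕ} (J : Idx (n+1)) (h : J 0 = true) :
    repl (Fin.cons true J) 0 true = J := by
  funext i
  induction i using Fin.cases with
  | zero => rw [repl_apply_eq, h]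
  | succ i =>
    rw [repl_apply_gt _ _ _ (by simp), Fin.cons_succ]
-- dup: insert a duplicate `true` before position p
noncomputable def dup {n : ℕ} (J : Idx n) (p : Fin n) : Idx (n+1) :=
  Fin.insertNth p.castSucc true J

lemma apply_congr {n : ℕ} (J : Idx n) {a b : Fin n} (h : a.val = b.val) : J a = J b :=
  congrArg J (Fin.ext h)

lemma dup_self {n : ℕ} (J : Idx n) (p : Fin n) : dup J p p.castSucc = true :=
  Fin.insertNth_apply_same _ _ _

lemma dup_succ_self {n : ℕ} (J : Idx n) (p : Fin n) : dup J p p.succ = J p := by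
  rw [dup, ← Fin.succAbove_castSucc_self, Fin.insertNth_apply_succAbove]

lemma dup_castSucc_lt {n : ℕ} (J : Idx n) (p : Fin n) {i : Fin n} (h : i.val < p.val) :
    dup J p i.castSucc = J i := by
  rw [dup, ← Fin.succAbove_castSucc_of_lt p i h, Fin.insertNth_apply_succAbove]

lemma dup_succ_ge {n : ℕ} (J : Idx n) (p : Fin n) {i : Fin n} (h : p.val ≤ i.val) :
    dup J p i.succ = J i := by
  rw [dup, ← Fin.succAbove_castSucc_of_le p i h, Fin.insertNth_apply_succAbove]

lemma dup_apply_lt {n : ℕ} (J : Idx n) (p : Fin n) {i : Fin (n+1)} (hn : i.val < n)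
    (h : i.val < p.val) : dup J p i = J ⟨i.val, hn⟩ := by
  have hi : i = Fin.castSucc ⟨i.val, hn⟩ := Fin.ext rfl
  conv_lhs => rw [hi]
  exact dup_castSucc_lt J p h

lemma dup_apply_eq {n : ℕ} (J : Idx n) (p : Fin n) {i : Fin (n+1)}
    (h : i.val = p.val) : dup J p i = true := by
  have hi : i = p.castSucc := Fin.ext (by simpa using h)
  rw [hi]; exact dup_self J p

lemma dup_apply_gt {n : ℕ} (J : Idx n) (p : Fin n) {i : Fin (n+1)} (hn : i.val - 1 < n)
    (h : p.val < i.val) : dup J p i = J ⟨i.val - 1, hn⟩ := by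
  have hi : i = Fin.succ ⟨i.val - 1, hn⟩ := Fin.ext (by simp only [Fin.val_succ, Fin.coe_castSucc]; omega)
  conv_lhs => rw [hi]
  exact dup_succ_ge J p (by simp only [Fin.val_succ, Fin.coe_castSucc]; omega)

lemma pc_dup {n : ℕ} (J : Idx n) (p : Fin n) : pc (dup J p) = pc J + 1 := by
  rw [pc_eq, Fin.sum_univ_succAbove _ p.castSucc, dup_self]
  simp only [dup, Fin.insertNth_apply_succAbove]
  rw [pc_eq]
  simp [add_comm]

lemma repl_dup {n : ℕ} (J : Idx n) (p : Fin n) (h : J p = true) :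
    repl (dup J p) p true = J := by
  funext i
  rcases lt_trichotomy i.val p.val with hl | he | hg
  · rw [repl_apply_lt _ _ _ hl, dup_castSucc_lt J p hl]
  · have : i = p := Fin.ext he
    subst this
    rw [repl_apply_eq, h]
  · rw [repl_apply_gt _ _ _ hg, dup_succ_ge J p (le_of_lt hg)]

lemma repl_dup_comm {n : ℕ} (J : Idx (n+1)) (m₀ : Fin (n+1)) (k : Fin n) (m₁ : Fin n)
    (hval : m₁.val = m₀.val) (hle : m₀.val ≤ k.val) :
    repl (dup J m₀) k.succ true = dup (repl J k true) m₁ := by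
  have hk := k.isLt
  funext i
  have hi := i.isLt
  rcases lt_trichotomy i.val m₁.val with h1 | h1 | h1
  · rw [repl_apply_lt _ _ _ (show i.val < k.succ.val by simp only [Fin.val_succ, Fin.coe_castSucc]; omega),
      dup_apply_lt J m₀ (by simp only [Fin.val_succ, Fin.coe_castSucc]; omega) (by simp only [Fin.val_succ, Fin.coe_castSucc]; omega),
      dup_apply_lt _ m₁ (by omega) h1,
      repl_apply_lt _ _ _ (by simp only [Fin.val_succ, Fin.coe_castSucc]; omega)]
    exact apply_congr J (by simp)
  · rw [repl_apply_lt _ _ _ (show i.val < k.succ.val by simp only [Fin.val_succ, Fin.coe_castSucc]; omega),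
      dup_apply_eq J m₀ (by simp only [Fin.val_succ, Fin.coe_castSucc]; omega), dup_apply_eq _ m₁ h1]
  · rcases lt_trichotomy i.val (k.val + 1) with h2 | h2 | h2
    · rw [repl_apply_lt _ _ _ (show i.val < k.succ.val by simp only [Fin.val_succ, Fin.coe_castSucc]; omega),
        dup_apply_gt J m₀ (by simp only [Fin.val_succ, Fin.coe_castSucc]; omega) (by simp only [Fin.val_succ, Fin.coe_castSucc]; omega),
        dup_apply_gt _ m₁ (by omega) h1,
        repl_apply_lt _ _ _ (by simp only [Fin.val_succ, Fin.coe_castSucc]; omega)]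
      exact apply_congr J (by simp)
    · have : i = k.succ := Fin.ext (by simp only [Fin.val_succ, Fin.coe_castSucc]; omega)
      subst this
      rw [repl_apply_eq, dup_apply_gt _ m₁ (by simp only [Fin.val_succ, Fin.coe_castSucc]; omega) h1]
      rw [show (⟨k.succ.val - 1, by simp only [Fin.val_succ, Fin.coe_castSucc]; omega⟩ : Fin n) = k from Fin.ext (by simp),
        repl_apply_eq]
    · rw [repl_apply_gt _ _ _ (show k.succ.val < i.val by simp only [Fin.val_succ, Fin.coe_castSucc]; omega),
        dup_apply_gt J m₀ (by simp only [Fin.val_succ, Fin.coe_castSucc]; omega) (by simp only [Fin.val_succ, Fin.coe_castSucc]; omega),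
        dup_apply_gt _ m₁ (by omega) h1,
        repl_apply_gt _ _ _ (by simp only [Fin.val_succ, Fin.coe_castSucc]; omega)]
      exact apply_congr J (by simp only [Fin.val_succ, Fin.coe_castSucc]; omega)

lemma pcP_dup {n : ℕ} (J : Idx n) (p : Fin n) (k : ℕ) (hle : p.val ≤ k) :
    pcP (dup J p) (k + 1) = pcP J k + 1 := by
  rw [pcP_eq, Fin.sum_univ_succAbove _ p.castSucc, dup_self,
    if_pos (show p.castSucc.val < k + 1 by simp only [Fin.coe_castSucc]; omega)]
  have key : ∀ i : Fin n, (if ((p.castSucc).succAbove i).val < k + 1 then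
      pb (dup J p (p.castSucc.succAbove i)) else 0) = if i.val < k then pb (J i) else 0 := by
    intro i
    have hd : dup J p (p.castSucc.succAbove i) = J i := by
      rw [dup, Fin.insertNth_apply_succAbove]
    rw [hd]
    rcases lt_or_ge i.val p.val with h | h
    · rw [Fin.succAbove_castSucc_of_lt p i h,
        if_pos (show (i.castSucc).val < k + 1 by simp only [Fin.coe_castSucc]; omega),
        if_pos (by omega)]
    · rw [Fin.succAbove_castSucc_of_le p i h]
      by_cases h2 : i.val < k
      · rw [if_pos (show (i.succ).val < k + 1 by simp only [Fin.val_succ]; omega), if_pos h2]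
      · rw [if_neg (show ¬ (i.succ).val < k + 1 by simp only [Fin.val_succ]; omega), if_neg h2]
  rw [Finset.sum_congr rfl (fun i _ => key i), pcP_eq, pb_true]
  omega
lemma find_some_iff' {n : ℕ} {K : Idx n} {i : Fin n} :
    Fin.find? (fun j => K j) = some i ↔ K i = true ∧ ∀ j, K j = true → i ≤ j := by
  rw [Fin.find?_eq_some_iff]
  constructor
  · rintro ⟨h1, h2⟩
    refine ⟨h1, fun j hj => ?_⟩
    by_contra hlt
    push_neg at hlt
    have := h2 j hlt
    simp_all
  · rintro ⟨h1, h2⟩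
    refine ⟨h1, fun j hj => ?_⟩
    by_contra hne
    have := h2 j (by simpa using hne)
    exact absurd hj (not_lt.mpr this)

lemma find_none_iff' {n : ℕ} {K : Idx n} :
    Fin.find? (fun j => K j) = none ↔ ∀ i, ¬ K i = true := by
  rw [Fin.find?_eq_none_iff]
  simp

-- the homotopy
noncomputable def hom {m : ℕ} (φ : Cochain (m+1)) : Cochain m := fun K i =>
  match i with
  | true => msign (pc K + 1) * φ (Fin.cons true K) true
  | false =>
    match Fin.find? (fun j => K j) with
    | some p => msign (pc K + 1) * φ (dup K p) false
    | none => 0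

lemma hom_true {m : ℕ} (φ : Cochain (m+1)) (K : Idx m) :
    hom φ K true = msign (pc K + 1) * φ (Fin.cons true K) true := rfl

lemma hom_false_some {m : ℕ} (φ : Cochain (m+1)) (K : Idx m) {p : Fin m}
    (h : Fin.find? (fun j => K j) = some p) :
    hom φ K false = msign (pc K + 1) * φ (dup K p) false := by
  rw [hom]; simp only [h]

lemma hom_false_none {m : ℕ} (φ : Cochain (m+1)) (K : Idx m)
    (h : Fin.find? (fun j => K j) = none) :
    hom φ K false = 0 := by
  rw [hom]; simp only [h]

-- find facts
lemma find_repl {n : ℕ} (J : Idx (n+1)) (k : Fin n) {m₀ : Fin (n+1)}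
    (hf : Fin.find? (fun j => J j) = some m₀) (hle : m₀.val ≤ k.val) :
    Fin.find? (fun j => repl J k true j) = some (⟨m₀.val, lt_of_le_of_lt hle k.isLt⟩ : Fin n) := by
  obtain ⟨hm₀, hmin⟩ := find_some_iff'.mp hf
  rw [find_some_iff']
  constructor
  · set m₁ : Fin n := ⟨m₀.val, lt_of_le_of_lt hle k.isLt⟩ with hm₁
    rcases eq_or_lt_of_le hle with he | hl
    · rw [show m₁ = k from Fin.ext he, repl_apply_eq]
    · rw [repl_apply_lt J k true (show m₁.val < k.val from hl),
        apply_congr J (show (m₁.castSucc).val = m₀.val by simp [hm₁])]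
      exact hm₀
  · intro j hj
    by_contra hlt
    push_neg at hlt
    have hjv : j.val < m₀.val := hlt
    have : J j.castSucc = true := by
      rw [← repl_apply_lt J k true (show j.val < k.val by omega)]
      exact hj
    have := hmin _ this
    simp only [Fin.le_def, Fin.coe_castSucc] at this
    omega
lemma dd2_apply (x y j : Bool) : dd2 x y j = if x = true ∧ y = true ∧ j = true then 1 else 0 := by
  rw [dd2, delta2]

lemma sum_dd2_3 (g : Bool → ℂ) (x y : Bool) :
    (∑ j : Bool, g j * dd2 x y j) = if x = true ∧ y = true then g true else 0 := by
  rw [Fintype.sum_bool, dd2_apply, dd2_apply]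
  by_cases hx : x = true <;> by_cases hy : y = true <;> simp [hx, hy]

lemma sum_dd2_1 (g : Bool → ℂ) (y i : Bool) :
    (∑ j : Bool, g j * dd2 j y i) = if y = true ∧ i = true then g true else 0 := by
  rw [Fintype.sum_bool, dd2_apply, dd2_apply]
  by_cases hy : y = true <;> by_cases hi : i = true <;> simp [hy, hi]

lemma sum_dd2_2 (g : Bool → ℂ) (x i : Bool) :
    (∑ j : Bool, g j * dd2 x j i) = if x = true ∧ i = true then g true else 0 := by
  rw [Fintype.sum_bool, dd2_apply, dd2_apply]
  by_cases hx : x = true <;> by_cases hi : i = true <;> simp [hx, hi]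

/-- Simplified form of the coboundary for `d₂`. -/
lemma Dmap_dd2 {n : ℕ} (φ : Cochain n) (J : Idx (n+1)) (i : Bool) :
    Dmap dd2 φ J i =
      (if J (Fin.last n) = true ∧ i = true then φ (fun k => J k.castSucc) true else 0)
      + (if J 0 = true ∧ i = true then
          msign (pc (fun k : Fin n => J k.succ) + 1) * φ (fun k => J k.succ) true else 0)
      - ∑ k : Fin n, (if J k.castSucc = true ∧ J k.succ = true then
          msign (pc (repl J k true) + pb i + pcP J k.val) * φ (repl J k true) i else 0) := by
  rw [Dmap]
  congr 1
  congr 1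
  · exact sum_dd2_1 (fun j => φ (fun k => J k.castSucc) j) (J (Fin.last n)) i
  · have : (∑ j : Bool, msign ((pc (fun k : Fin n => J k.succ) + pb j) * pb (J 0)) *
        (φ (fun k => J k.succ) j * dd2 (J 0) j i))
        = ∑ j : Bool, (msign ((pc (fun k : Fin n => J k.succ) + pb j) * pb (J 0)) *
            φ (fun k => J k.succ) j) * dd2 (J 0) j i := by
      refine Finset.sum_congr rfl fun j _ => by ring
    rw [this, sum_dd2_2]
    by_cases h : J 0 = true ∧ i = true
    · rw [if_pos h, if_pos h, h.1, pb_true, mul_one]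
    · rw [if_neg h, if_neg h]
  · refine Finset.sum_congr rfl fun k _ => ?_
    have : (∑ j : Bool, msign (pc (repl J k j) + pb i + pcP J k.val) *
          (φ (repl J k j) i * dd2 (J k.castSucc) (J k.succ) j))
        = ∑ j : Bool, (msign (pc (repl J k j) + pb i + pcP J k.val) *
            φ (repl J k j) i) * dd2 (J k.castSucc) (J k.succ) j := by
      refine Finset.sum_congr rfl fun j _ => by ring
    rw [this, sum_dd2_3]
lemma cons_succ_castSucc {n : ℕ} (b : Bool) (J : Idx (n+1)) (x : Fin n) :
    (Fin.cons b J : Idx (n+2)) x.succ.castSucc = J x.castSucc := by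
  rw [← Fin.succ_castSucc, Fin.cons_succ]

lemma key_true {m : ℕ} (φ : Cochain (m+1)) (J : Idx (m+1)) :
    Dmap dd2 (hom φ) J true
      = φ J true - msign (pc J + 1) * Dmap dd2 φ (Fin.cons true J) true := by
  have hlast : (Fin.cons true J : Idx (m+2)) (Fin.last (m+1)) = J (Fin.last m) := cons_last true J
  have htail : (fun k : Fin (m+1) => (Fin.cons true J : Idx (m+2)) k.succ) = J :=
    funext fun k => by rw [Fin.cons_succ]
  have hinit : (fun k : Fin (m+1) => (Fin.cons true J : Idx (m+2)) k.castSucc)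
      = Fin.cons true (fun k : Fin m => J k.castSucc) := by
    funext k
    induction k using Fin.cases with
    | zero => rw [Fin.castSucc_zero, Fin.cons_zero, Fin.cons_zero]
    | succ k => rw [← Fin.succ_castSucc, Fin.cons_succ, Fin.cons_succ]
  rw [Dmap_dd2, Dmap_dd2, hlast, htail, hinit, Fin.sum_univ_succ]
  simp only [Fin.castSucc_zero, Fin.cons_zero, Fin.cons_succ, Fin.val_zero, Fin.val_succ,
    pb_true, true_and, and_true, pcP_zero, repl_cons_succ, pc_cons, pcP_cons, hom_true,
    cons_succ_castSucc, if_true]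
  -- named pieces
  have hA : (if J (Fin.last m) = true then
        msign ((pc fun k => J k.castSucc) + 1) * φ (Fin.cons true fun k => J k.castSucc) true
      else 0)
      + msign (pc J + 1) * (if J (Fin.last m) = true then
          φ (Fin.cons true fun k => J k.castSucc) true else 0) = 0 := by
    by_cases h : J (Fin.last m) = true
    · rw [if_pos h, if_pos h]
      have hpc : pc J = (pc fun k : Fin m => J k.castSucc) + 1 := by
        rw [pc_eq, Fin.sum_univ_castSucc, h, pb_true, ← pc_eq]
      rw [hpc]
      exact msign_cancel (by omega) _
    · rw [if_neg h, if_neg h]; ring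
  have hB : (if J 0 = true then
        msign ((pc fun k => J k.succ) + 1) *
          (msign ((pc fun k => J k.succ) + 1) * φ (Fin.cons true fun k => J k.succ) true)
      else 0) = if J 0 = true then φ J true else 0 := by
    by_cases h0 : J 0 = true
    · rw [if_pos h0, if_pos h0, ← mul_assoc, msign_sq, one_mul]
      have hJ : (Fin.cons true fun k : Fin m => J k.succ) = J := by
        rw [← h0]; exact Fin.cons_self_tail J
      rw [hJ]
    · rw [if_neg h0, if_neg h0]
  have hT0 : (if J 0 = true then
        msign (pc (repl (Fin.cons true J) 0 true) + 1 + 0) * φ (repl (Fin.cons true J) 0 true) true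
      else 0) = if J 0 = true then msign (pc J + 1) * φ J true else 0 := by
    by_cases h0 : J 0 = true
    · rw [if_pos h0, if_pos h0, repl_cons_zero J h0, add_zero]
    · rw [if_neg h0, if_neg h0]
  rw [hB, hT0]
  have hBT : (if J 0 = true then φ J true else 0)
      - msign (pc J + 1) * (if J 0 = true then msign (pc J + 1) * φ J true else 0) = 0 := by
    by_cases h0 : J 0 = true
    · rw [if_pos h0, if_pos h0, ← mul_assoc, msign_sq, one_mul]; ring
    · rw [if_neg h0, if_neg h0]; ring
  have hB2 : msign (pc J + 1) * (msign (pc J + 1) * φ J true) = φ J true := by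
    rw [← mul_assoc, msign_sq, one_mul]
  have hS : ∀ x : Fin m,
      (if J x.castSucc = true ∧ J x.succ = true then
          msign (pc (repl J x true) + 1 + pcP J x.val) *
            (msign (pc (repl J x true) + 1) * φ (Fin.cons true (repl J x true)) true)
        else 0)
      + msign (pc J + 1) * (if J x.castSucc = true ∧ J x.succ = true then
          msign (1 + pc (repl J x true) + 1 + (1 + pcP J x.val)) *
            φ (Fin.cons true (repl J x true)) true
        else 0) = 0 := by
    intro x
    by_cases h : J x.castSucc = true ∧ J x.succ = true
    · rw [if_pos h, if_pos h, ← mul_assoc, msign_mul, ← mul_assoc, msign_mul,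
        pc_repl J x h.2 h.1]
      exact msign_cancel (by omega) _
    · rw [if_neg h, if_neg h]; ring
  have hSsum : (∑ x : Fin m,
        if J x.castSucc = true ∧ J x.succ = true then
          msign (pc (repl J x true) + 1 + pcP J x.val) *
            (msign (pc (repl J x true) + 1) * φ (Fin.cons true (repl J x true)) true)
        else 0)
      + msign (pc J + 1) * (∑ x : Fin m,
        if J x.castSucc = true ∧ J x.succ = true then
          msign (1 + pc (repl J x true) + 1 + (1 + pcP J x.val)) *
            φ (Fin.cons true (repl J x true)) true
        else 0) = 0 := by
    rw [Finset.mul_sum, ← Finset.sum_add_distrib]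
    exact Finset.sum_eq_zero fun x _ => hS x
  linear_combination hA + hBT + hB2 - hSsum
lemma msign_odd {a : ℕ} (h : a % 2 = 1) : msign a = -1 := by
  rw [msign_apply, if_neg (by omega)]

lemma key_false_some {m : ℕ} (φ : Cochain (m+1)) (J : Idx (m+1)) {m₀ : Fin (m+1)}
    (hf : Fin.find? (fun j => J j) = some m₀) :
    Dmap dd2 (hom φ) J false
      = φ J false - msign (pc J + 1) * Dmap dd2 φ (dup J m₀) false := by
  obtain ⟨hm₀, hmin⟩ := find_some_iff'.mp hf
  have hbelow : ∀ j : Fin (m+1), j.val < m₀.val → J j = false := by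
    intro j hj
    cases hJ : J j with
    | false => rfl
    | true => exact absurd (hmin j hJ) (by rw [Fin.le_def]; omega)
  have hbelow' : ∀ (v : ℕ) (h : v < m+1), v < m₀.val → J ⟨v, h⟩ = false := fun v h hv =>
    hbelow ⟨v, h⟩ hv
  rw [Dmap_dd2, Dmap_dd2, Fin.sum_univ_succAbove _ m₀]
  simp only [Bool.false_eq_true, and_false, if_false, pb_false, add_zero]
  have hmain : (if dup J m₀ m₀.castSucc = true ∧ dup J m₀ m₀.succ = true then
        msign (pc (repl (dup J m₀) m₀ true) + pcP (dup J m₀) ↑m₀) *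
          φ (repl (dup J m₀) m₀ true) false
      else 0) = msign (pc J) * φ J false := by
    rw [if_pos ⟨dup_self J m₀, by rw [dup_succ_self]; exact hm₀⟩, repl_dup J m₀ hm₀,
      pcP_eq_zero _ _ (fun i hi => by
        rw [dup_apply_lt J m₀ (by omega) hi]
        exact hbelow' _ _ hi), add_zero]
  have hterm : ∀ x : Fin m,
      (if J x.castSucc = true ∧ J x.succ = true then
          msign (pc (repl J x true) + pcP J ↑x) * hom φ (repl J x true) false
        else 0)
      + msign (pc J + 1) *
        (if dup J m₀ (m₀.succAbove x).castSucc = true ∧ dup J m₀ (m₀.succAbove x).succ = true then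
          msign (pc (repl (dup J m₀) (m₀.succAbove x) true) + pcP (dup J m₀) ↑(m₀.succAbove x)) *
            φ (repl (dup J m₀) (m₀.succAbove x) true) false
        else 0) = 0 := by
    intro x
    by_cases hc : J x.castSucc = true ∧ J x.succ = true
    · have hle : m₀.val ≤ x.val := by
        have := hmin _ hc.1
        rw [Fin.le_def] at this
        simpa using this
      have hsA : m₀.succAbove x = x.succ :=
        Fin.succAbove_of_lt_succ _ _ (by rw [Fin.lt_def]; simp only [Fin.val_succ]; omega)
      have h1 : dup J m₀ x.succ.castSucc = J x.castSucc := by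
        rw [← Fin.succ_castSucc]
        exact dup_succ_ge J m₀ (by simp only [Fin.coe_castSucc]; omega)
      have h2 : dup J m₀ x.succ.succ = J x.succ :=
        dup_succ_ge J m₀ (by simp only [Fin.val_succ]; omega)
      rw [hsA, h1, h2, if_pos hc, if_pos hc]
      rw [repl_dup_comm J m₀ x ⟨m₀.val, lt_of_le_of_lt hle x.isLt⟩ rfl hle]
      rw [hom_false_some φ _ (find_repl J x hf hle)]
      rw [pc_dup, Fin.val_succ, pcP_dup J m₀ x.val hle]
      rw [← mul_assoc, msign_mul, ← mul_assoc, msign_mul, pc_repl J x hc.2 hc.1]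
      exact msign_cancel (by omega) _
    · rcases lt_or_ge x.val m₀.val with hlt | hle
      · have hsA : m₀.succAbove x = x.castSucc :=
          Fin.succAbove_of_castSucc_lt _ _ (by rw [Fin.lt_def]; simpa using hlt)
        have hfalse : dup J m₀ x.castSucc.castSucc = false := by
          rw [dup_apply_lt J m₀ (by simp only [Fin.coe_castSucc]; omega)
            (by simp only [Fin.coe_castSucc]; omega)]
          exact hbelow' _ _ (by simp only [Fin.coe_castSucc]; omega)
        rw [hsA, if_neg hc, if_neg (by rw [hfalse]; simp)]
        ring
      · have hsA : m₀.succAbove x = x.succ :=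
          Fin.succAbove_of_lt_succ _ _ (by rw [Fin.lt_def]; simp only [Fin.val_succ]; omega)
        have h1 : dup J m₀ x.succ.castSucc = J x.castSucc := by
          rw [← Fin.succ_castSucc]
          exact dup_succ_ge J m₀ (by simp only [Fin.coe_castSucc]; omega)
        have h2 : dup J m₀ x.succ.succ = J x.succ :=
          dup_succ_ge J m₀ (by simp only [Fin.val_succ]; omega)
        rw [hsA, h1, h2, if_neg hc, if_neg hc]
        ring
  have hSsum : (∑ x : Fin m,
        if J x.castSucc = true ∧ J x.succ = true then
          msign (pc (repl J x true) + pcP J ↑x) * hom φ (repl J x true) false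
        else 0)
      + msign (pc J + 1) * (∑ x : Fin m,
        if dup J m₀ (m₀.succAbove x).castSucc = true ∧ dup J m₀ (m₀.succAbove x).succ = true then
          msign (pc (repl (dup J m₀) (m₀.succAbove x) true) + pcP (dup J m₀) ↑(m₀.succAbove x)) *
            φ (repl (dup J m₀) (m₀.succAbove x) true) false
        else 0) = 0 := by
    rw [Finset.mul_sum, ← Finset.sum_add_distrib]
    exact Finset.sum_eq_zero fun x _ => hterm x
  have hU0 : φ J false + msign (pc J + 1) * (msign (pc J) * φ J false) = 0 := by
    rw [← mul_assoc, msign_mul, msign_odd (by omega)]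
    ring
  rw [hmain]
  linear_combination -hU0 - hSsum
lemma phiE_apply {n : ℕ} (J : Idx n) (i : Bool) :
    phiE n J i = if (J = fun _ => false) ∧ i = false then 1 else 0 := rfl

lemma DphiE {n : ℕ} (J : Idx (n+1)) (i : Bool) : Dmap dd2 (phiE n) J i = 0 := by
  rw [Dmap_dd2]
  have h1 : phiE n (fun k : Fin n => J k.castSucc) true = 0 := by
    rw [phiE_apply]; simp
  have h2 : phiE n (fun k : Fin n => J k.succ) true = 0 := by
    rw [phiE_apply]; simp
  have h3 : ∀ k : Fin n, phiE n (repl J k true) i = 0 := by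
    intro k
    rw [phiE_apply, if_neg]
    rintro ⟨hc, -⟩
    have := congrFun hc k
    rw [repl_apply_eq] at this
    exact Bool.noConfusion this
  rw [h1, h2]
  simp only [mul_zero, ite_self, if_neg, Finset.sum_const_zero]
  have : ∀ k : Fin n, (if J k.castSucc = true ∧ J k.succ = true then
      msign (pc (repl J k true) + pb i + pcP J k.val) * phiE n (repl J k true) i else 0) = 0 := by
    intro k
    rw [h3 k, mul_zero, ite_self]
  rw [Finset.sum_congr rfl fun k _ => this k]
  simp

lemma Dvanish {n : ℕ} (ψ : Cochain n) : Dmap dd2 ψ (fun _ => false) false = 0 := by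
  rw [Dmap_dd2]
  simp

lemma Dhom_false_none {m : ℕ} (φ : Cochain (m+1)) (J : Idx (m+1))
    (h : ∀ j, J j = false) : Dmap dd2 (hom φ) J false = 0 := by
  rw [Dmap_dd2]
  simp [h]

lemma D0 (φ : Cochain 0) : Dmap dd2 φ = 0 := by
  funext J i
  rw [Dmap_dd2]
  have hc : (fun k : Fin 0 => J k.castSucc) = (fun k : Fin 0 => J k.succ) :=
    funext fun k => k.elim0
  have hpc : pc (fun k : Fin 0 => J k.succ) = 0 := by
    rw [pc_eq]; simp
  have hl : Fin.last 0 = 0 := rfl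
  rw [hl, hc, hpc]
  by_cases h : J 0 = true ∧ i = true
  · rw [if_pos h, if_pos h]
    have : msign (0 + 1) = -1 := msign_odd (by omega)
    rw [this]
    simp
  · rw [if_neg h, if_neg h]
    simp
lemma Dlin_apply (d : Bool → Bool → Bool → ℂ) {n : ℕ} (φ : Cochain n) :
    Dlin d n φ = Dmap d φ := rfl

lemma exact_step {m : ℕ} (φ : Cochain (m+1)) (hφ : Dmap dd2 φ = 0) :
    Dmap dd2 (hom φ) = φ - (φ (fun _ => false) false) • phiE (m+1) := by
  have hD : ∀ (J : Idx (m+2)) (i : Bool), Dmap dd2 φ J i = 0 := fun J i => by rw [hφ]; rfl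
  funext J i
  cases i with
  | true =>
    rw [key_true, hD, mul_zero, sub_zero]
    have : phiE (m+1) J true = 0 := by rw [phiE_apply]; simp
    simp [this]
  | false =>
    cases hfind : Fin.find? (fun j => J j) with
    | none =>
      have hall : ∀ j, J j = false := by
        intro j
        have := find_none_iff'.mp hfind j
        cases hJ : J j with
        | false => rfl
        | true => exact absurd hJ this
      have hJ : J = fun _ => false := funext hall
      rw [Dhom_false_none φ J hall]
      subst hJ
      have : phiE (m+1) (fun _ => false) false = 1 := by rw [phiE_apply]; simp
      simp [this]
    | some m₀ =>
      rw [key_false_some φ J hfind, hD, mul_zero, sub_zero]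
      have hm₀ : J m₀ = true := (find_some_iff'.mp hfind).1
      have : phiE (m+1) J false = 0 := by
        rw [phiE_apply, if_neg]
        rintro ⟨hc, -⟩
        have := congrFun hc m₀
        rw [hm₀] at this
        exact Bool.noConfusion this
      simp [this]

lemma cocycle_exact {m : ℕ} (φ : Cochain (m+1)) (hφ : φ ∈ Zsp dd2 (m+1)) :
    ∃ a : ℂ, φ - a • phiE (m+1) ∈ Bsp dd2 (m+1) := by
  refine ⟨φ (fun _ => false) false, ?_⟩
  have hφ' : Dmap dd2 φ = 0 := LinearMap.mem_ker.mp hφ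
  exact ⟨hom φ, exact_step φ hφ'⟩

lemma phiE_mem {m : ℕ} : phiE (m+1) ∈ Zsp dd2 (m+1) := by
  rw [Zsp, LinearMap.mem_ker]
  funext J i
  exact DphiE J i
lemma Zsp0_top : Zsp dd2 0 = ⊤ := by
  rw [Zsp]
  have : Dlin dd2 0 = 0 := LinearMap.ext fun φ => D0 φ
  rw [this]
  exact LinearMap.ker_zero

lemma Z0_span : Zsp dd2 0 = Submodule.span ℂ {phiE 0, phiF 0} := by
  rw [Zsp0_top]
  symm
  rw [eq_top_iff]
  intro φ _
  refine Submodule.mem_span_pair.mpr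
    ⟨φ (fun _ => false) false, φ (fun _ => false) true, ?_⟩
  funext J i
  have hJ : J = fun _ => false := Subsingleton.elim _ _
  subst hJ
  cases i <;>
    simp [phiE, phiF, bC, Pi.add_apply, Pi.smul_apply, smul_eq_mul]

lemma rank_zero : Module.rank ℂ (Hsp dd2 0) = 2 := by
  have hbot : (Submodule.comap (Zsp dd2 0).subtype (Bsp dd2 0)) = ⊥ := by
    have hb : Bsp dd2 0 = ⊥ := rfl
    rw [hb, Submodule.comap_bot, Submodule.ker_subtype]
  have e1 := Submodule.quotEquivOfEqBot _ hbot
  have e2 : (Zsp dd2 0 : Type) ≃ₗ[ℂ] Cochain 0 :=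
    (LinearEquiv.ofEq _ _ Zsp0_top).trans Submodule.topEquiv
  have e3 : Cochain 0 ≃ₗ[ℂ] (Bool → ℂ) := LinearEquiv.funUnique (Idx 0) ℂ (Bool → ℂ)
  rw [e1.rank_eq, e2.rank_eq, e3.rank_eq, rank_fun']
  simp

lemma rank_one {m : ℕ} : Module.rank ℂ (Hsp dd2 (m+1)) = 1 := by
  let x : Zsp dd2 (m+1) := ⟨phiE (m+1), phiE_mem⟩
  let L : ℂ →ₗ[ℂ] Hsp dd2 (m+1) :=
    (Submodule.mkQ _).comp (LinearMap.toSpanSingleton ℂ (Zsp dd2 (m+1)) x)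
  have hL : ∀ a : ℂ, L a = Submodule.Quotient.mk (a • x) := fun a => rfl
  have hsurj : Function.Surjective L := by
    intro c
    obtain ⟨⟨φ, hφZ⟩, rfl⟩ := Submodule.Quotient.mk_surjective _ c
    obtain ⟨a, ha⟩ := cocycle_exact φ hφZ
    refine ⟨a, ?_⟩
    rw [hL, Submodule.Quotient.eq, Submodule.mem_comap]
    have hsub : (Zsp dd2 (m+1)).subtype (a • x - ⟨φ, hφZ⟩) = -(φ - a • phiE (m+1)) := by
      rw [map_sub, map_smul]
      show a • phiE (m+1) - φ = -(φ - a • phiE (m+1))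
      rw [neg_sub]
    rw [hsub]
    exact neg_mem ha
  have hinj : Function.Injective L := by
    rw [← LinearMap.ker_eq_bot, eq_bot_iff]
    intro a haker
    have ha : Submodule.Quotient.mk (a • x) = (0 : Hsp dd2 (m+1)) := by
      rw [← hL]; exact haker
    rw [Submodule.Quotient.mk_eq_zero, Submodule.mem_comap] at ha
    have hmem : (a • phiE (m+1) : Cochain (m+1)) ∈ Bsp dd2 (m+1) := by
      have hxx : (Zsp dd2 (m+1)).subtype (a • x) = a • phiE (m+1) := by
        rw [map_smul]; rfl
      rwa [hxx] at ha
    obtain ⟨ψ, hψ⟩ := hmem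
    rw [Dlin_apply] at hψ
    have hev := congrFun (congrFun hψ (fun _ => false)) false
    rw [Dvanish ψ] at hev
    have hval : (a • phiE (m+1) : Cochain (m+1)) (fun _ => false) false = a := by
      rw [Pi.smul_apply, Pi.smul_apply, phiE_apply, smul_eq_mul]
      simp
    rw [hval] at hev
    rw [Submodule.mem_bot]
    exact hev.symm
  have e := LinearEquiv.ofBijective L ⟨hinj, hsurj⟩
  rw [← e.rank_eq, Module.rank_self]

/-- For `d₂ = ψ_f^{ff}`: `H⁰(d₂) = ⟨φ_e, φ_f⟩` is 2-dimensional, and for `n ≥ 1`,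
`Hⁿ(d₂) = ⟨φ_e^{eⁿ}⟩` is 1-dimensional, spanned by the class of the cocycle `φ_e^{eⁿ}`. -/
theorem d2_cohomology :
    (Zsp dd2 0 = Submodule.span ℂ {phiE 0, phiF 0})
      ∧ Module.rank ℂ (Hsp dd2 0) = 2
      ∧ ∀ n : ℕ, 1 ≤ n →
          phiE n ∈ Zsp dd2 n
            ∧ Module.rank ℂ (Hsp dd2 n) = 1
            ∧ ∀ φ ∈ Zsp dd2 n, ∃ a : ℂ, φ - a • phiE n ∈ Bsp dd2 n := by
  refine ⟨Z0_span, rank_zero, ?_⟩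
  intro n hn
  obtain ⟨m, rfl⟩ : ∃ m, n = m + 1 := ⟨n - 1, by omega⟩
  exact ⟨phiE_mem, rank_one, fun φ hφ => cocycle_exact φ hφ⟩
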